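/- Assume s ≥ r, N ≥ mn, and F is a finite field with q ≥ max(N, 2) elements, and let T_0,…,T_{N−1} ∈ ℝ be the (fixed) computation times of the N workers. Say a computation strategy is decodable at time t if there exists a function D with D((C̃_i)_{i ∈ S(t)}) = A^T B for all inputs A, B, where S(t) = { i : T_i ≤ t }. Then: (i) for every t, any computation strategy decodable at time t satisfies |S(t)| ≥ mn; (ii) the (1,m)-polynomial code is decodable at time t whenever |S(t)| ≥ mn; consequently the computation latency T = inf{ t : the strategy is decodable at time t } of any computation strategy satisfies T ≥ T_poly, where T_poly = inf{ t : |S(t)| ≥ mn } is the latency of the polynomial code. -/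

import Mathlib

open Matrix BigOperators

private lemma cardMat (F α β : Type*) [Fintype F] [Fintype α] [Fintype β] [DecidableEq α] [DecidableEq β] :
    Fintype.card (Matrix α β F) = Fintype.card F ^ (Fintype.card α * Fintype.card β) := by
  classical
  rw [Fintype.card_congr ((Matrix.of : (α → β → F) ≃ _).symm)]
  rw [Fintype.card_fun, Fintype.card_fun, ← pow_mul, mul_comm]

private lemma exp_eq_aux {m j j' k k' : ℕ} (hj : j < m) (hj' : j' < m)
    (h : j + k * m = j' + k' * m) : j = j' ∧ k = k' := by
  have hm : 0 < m := lt_of_le_of_lt (Nat.zero_le _) hj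
  have h1 : (j + k * m) % m = (j' + k' * m) % m := by rw [h]
  rw [Nat.add_mul_mod_self_right, Nat.add_mul_mod_self_right,
    Nat.mod_eq_of_lt hj, Nat.mod_eq_of_lt hj'] at h1
  subst h1
  have h2 : k * m = k' * m := by omega
  exact ⟨rfl, Nat.eq_of_mul_eq_mul_right hm h2⟩

/-- Theorem 2: with fixed worker computation times `T i`, (i) any
computation strategy decodable at time `t` must have at least `mn` finished workers
at time `t`; (ii) the (1,m)-polynomial code is decodable at time `t` whenever at
least `mn` workers have finished; consequently (iii) the computation latency of any
computation strategy is at least the latency `T_poly` of the polynomial code (the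
latencies are infima in `EReal`, so a never-decodable strategy has latency `⊤`). -/
theorem latency_lower_bound {F : Type*} [Field F] [Fintype F] {s p u m n N : ℕ}
    (hm : 0 < m) (hn : 0 < n) (hp : 0 < p) (hu : 0 < u)
    (hs : m * p ≤ s) (hN : m * n ≤ N) (hq : N ≤ Fintype.card F)
    (T : Fin N → ℝ) (x : Fin N → F) (hx : Function.Injective x)
    (f : Fin N → Matrix (Fin s) (Fin m × Fin p) F → Matrix (Fin s) (Fin p) F)
    (g : Fin N → Matrix (Fin s) (Fin n × Fin u) F → Matrix (Fin s) (Fin u) F) :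
    let DecAt : ℝ → Prop := fun t =>
      ∃ D : ({i : Fin N // T i ≤ t} → Matrix (Fin p) (Fin u) F) →
            Matrix (Fin m × Fin p) (Fin n × Fin u) F,
        ∀ (A : Matrix (Fin s) (Fin m × Fin p) F) (B : Matrix (Fin s) (Fin n × Fin u) F),
          D (fun i => (f i.1 A)ᵀ * g i.1 B) = Aᵀ * B
    (∀ t : ℝ, DecAt t → m * n ≤ Nat.card {i : Fin N // T i ≤ t})
    ∧
    (∀ t : ℝ, m * n ≤ Nat.card {i : Fin N // T i ≤ t} →
      ∃ D : ({i : Fin N // T i ≤ t} → Matrix (Fin p) (Fin u) F) →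
            Matrix (Fin m × Fin p) (Fin n × Fin u) F,
        ∀ (A : Matrix (Fin s) (Fin m × Fin p) F) (B : Matrix (Fin s) (Fin n × Fin u) F),
          D (fun i =>
              (∑ j : Fin m, x i.1 ^ (j : ℕ) • A.submatrix id (fun a => (j, a)))ᵀ *
              (∑ k : Fin n, x i.1 ^ ((k : ℕ) * m) • B.submatrix id (fun b => (k, b))))
            = Aᵀ * B)
    ∧
    sInf {e : EReal | ∃ t : ℝ, m * n ≤ Nat.card {i : Fin N // T i ≤ t} ∧ e = (t : EReal)}
      ≤ sInf {e : EReal | ∃ t : ℝ, DecAt t ∧ e = (t : EReal)} := by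
  classical
  intro DecAt
  -- Part (i)
  have part1 : ∀ t : ℝ, DecAt t → m * n ≤ Nat.card {i : Fin N // T i ≤ t} := by
    rintro t ⟨D, hD⟩
    haveI : Fintype {i : Fin N // T i ≤ t} := Fintype.ofFinite _
    set e : Fin m × Fin p → Fin s := fun jp => Fin.castLE hs (finProdFinEquiv jp) with he
    have hei : Function.Injective e := fun a b hab =>
      finProdFinEquiv.injective (Fin.castLE_injective hs hab)
    set A0 : Matrix (Fin s) (Fin m × Fin p) F := fun i jp => if e jp = i then 1 else 0 with hA0
    have hA0B : ∀ (B : Matrix (Fin s) (Fin n × Fin u) F) jp ku,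
        (A0ᵀ * B) jp ku = B (e jp) ku := by
      intro B jp ku
      rw [Matrix.mul_apply]
      simp only [Matrix.transpose_apply, hA0, ite_mul, one_mul, zero_mul]
      change ∑ x, (if e jp = x then (1:F) else 0) * B x ku = B (e jp) ku
      simp
    have hsurj : Function.Surjective D := by
      intro C
      set B : Matrix (Fin s) (Fin n × Fin u) F :=
        fun i ku => if h : ∃ jp, e jp = i then C h.choose ku else 0 with hB
      refine ⟨fun i => (f i.1 A0)ᵀ * g i.1 B, ?_⟩
      rw [hD A0 B]
      funext jp ku
      rw [hA0B]
      have hex : ∃ jp', e jp' = e jp := ⟨jp, rfl⟩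
      have hch : hex.choose = jp := hei hex.choose_spec
      simp only [hB, dif_pos hex, hch]
    have hcard := Fintype.card_le_of_surjective D hsurj
    rw [cardMat, Fintype.card_fun, cardMat] at hcard
    simp only [Fintype.card_prod, Fintype.card_fin, ← pow_mul] at hcard
    rw [Nat.card_eq_fintype_card]
    have hq2 : 2 ≤ Fintype.card F := Fintype.one_lt_card
    rw [Nat.pow_le_pow_iff_right hq2] at hcard
    have hpu : 0 < p * u := Nat.mul_pos hp hu
    have h' : (m * n) * (p * u) ≤ (Fintype.card {i : Fin N // T i ≤ t}) * (p * u) := by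
      calc (m * n) * (p * u) = m * p * (n * u) := by ring
        _ ≤ _ := by
          refine le_trans hcard (le_of_eq ?_)
          ring
    exact Nat.le_of_mul_le_mul_right h' hpu
  refine ⟨part1, ?_, ?_⟩
  · -- Part (ii)
    intro t hcard
    haveI : Fintype {i : Fin N // T i ≤ t} := Fintype.ofFinite _
    rw [Nat.card_eq_fintype_card] at hcard
    obtain ⟨S₀, -, hS₀⟩ := Finset.exists_subset_card_eq
      (s := (Finset.univ : Finset {i : Fin N // T i ≤ t})) (n := m * n)
      (by simpa [Finset.card_univ] using hcard)
    set v : {i : Fin N // T i ≤ t} → F := fun i => x i.1 with hv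
    have hvs : Set.InjOn v ↑S₀ := fun i _ j _ hij => Subtype.ext (hx hij)
    refine ⟨fun c jp ku =>
      (Lagrange.interpolate S₀ v (fun i => c i jp.2 ku.2)).coeff
        ((jp.1 : ℕ) + (ku.1 : ℕ) * m), ?_⟩
    intro A B
    funext jp ku
    obtain ⟨j, a⟩ := jp
    obtain ⟨k, b⟩ := ku
    set P : Polynomial F := ∑ j' : Fin m, ∑ k' : Fin n,
      Polynomial.C ((Aᵀ * B) (j', a) (k', b)) *
        Polynomial.X ^ ((j' : ℕ) + (k' : ℕ) * m) with hP
    have hdlt : ∀ (j' : Fin m) (k' : Fin n), (j' : ℕ) + (k' : ℕ) * m < m * n := by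
      intro j' k'
      have h1 : (j' : ℕ) + (k' : ℕ) * m < ((k' : ℕ) + 1) * m := by
        have := j'.isLt
        nlinarith [j'.isLt]
      have h2 : ((k' : ℕ) + 1) * m ≤ n * m := Nat.mul_le_mul_right m k'.isLt
      calc (j' : ℕ) + (k' : ℕ) * m < ((k' : ℕ) + 1) * m := h1
        _ ≤ n * m := h2
        _ = m * n := Nat.mul_comm n m
    have hmn : 0 < m * n := Nat.mul_pos hm hn
    have hdeg : P.degree < (S₀.card : ℕ) := by
      rw [hS₀, hP]
      refine lt_of_le_of_lt (Polynomial.degree_sum_le _ _) ?_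
      rw [Finset.sup_lt_iff (by exact_mod_cast WithBot.bot_lt_coe (m * n))]
      intro j' _
      refine lt_of_le_of_lt (Polynomial.degree_sum_le _ _) ?_
      rw [Finset.sup_lt_iff (by exact_mod_cast WithBot.bot_lt_coe (m * n))]
      intro k' _
      refine lt_of_le_of_lt (Polynomial.degree_C_mul_X_pow_le _ _) ?_
      exact_mod_cast hdlt j' k'
    have hblock : ∀ (j' : Fin m) (k' : Fin n),
        (Aᵀ * B) (j', a) (k', b)
          = ∑ w : Fin s, A w (j', a) * B w (k', b) := by
      intro j' k'
      rw [Matrix.mul_apply]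
      simp [Matrix.transpose_apply]
    have hval : ∀ i : {i : Fin N // T i ≤ t},
        ((∑ j' : Fin m, x i.1 ^ (j' : ℕ) • A.submatrix id (fun a => (j', a)))ᵀ *
         (∑ k' : Fin n, x i.1 ^ ((k' : ℕ) * m) • B.submatrix id (fun b => (k', b)))) a b
          = P.eval (v i) := by
      intro i
      set x0 : F := x i.1 with hx0
      have hL : ((∑ j' : Fin m, x0 ^ (j' : ℕ) • A.submatrix id (fun a => (j', a)))ᵀ *
          (∑ k' : Fin n, x0 ^ ((k' : ℕ) * m) • B.submatrix id (fun b => (k', b)))) a b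
          = ∑ w : Fin s, (∑ j' : Fin m, x0 ^ (j' : ℕ) * A w (j', a)) *
              (∑ k' : Fin n, x0 ^ ((k' : ℕ) * m) * B w (k', b)) := by
        rw [Matrix.mul_apply]
        simp [Matrix.transpose_apply, Matrix.sum_apply, Matrix.smul_apply,
          Matrix.submatrix_apply, smul_eq_mul]
      rw [hL]
      have hR : P.eval x0 = ∑ j' : Fin m, ∑ k' : Fin n,
          (∑ w : Fin s, A w (j', a) * B w (k', b)) * x0 ^ ((j' : ℕ) + (k' : ℕ) * m) := by
        rw [hP]
        simp [Polynomial.eval_finset_sum, hblock]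
      have hvi : P.eval (v i) = P.eval x0 := rfl
      rw [hvi, hR]
      calc ∑ w : Fin s, (∑ j' : Fin m, x0 ^ (j' : ℕ) * A w (j', a)) *
              (∑ k' : Fin n, x0 ^ ((k' : ℕ) * m) * B w (k', b))
          = ∑ w : Fin s, ∑ j' : Fin m, ∑ k' : Fin n,
              (x0 ^ (j' : ℕ) * A w (j', a)) * (x0 ^ ((k' : ℕ) * m) * B w (k', b)) := by
            exact Finset.sum_congr rfl fun w _ => Finset.sum_mul_sum _ _ _ _
        _ = ∑ j' : Fin m, ∑ w : Fin s, ∑ k' : Fin n,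
              (x0 ^ (j' : ℕ) * A w (j', a)) * (x0 ^ ((k' : ℕ) * m) * B w (k', b)) :=
            Finset.sum_comm
        _ = ∑ j' : Fin m, ∑ k' : Fin n, ∑ w : Fin s,
              (x0 ^ (j' : ℕ) * A w (j', a)) * (x0 ^ ((k' : ℕ) * m) * B w (k', b)) :=
            Finset.sum_congr rfl fun j' _ => Finset.sum_comm
        _ = ∑ j' : Fin m, ∑ k' : Fin n,
              (∑ w : Fin s, A w (j', a) * B w (k', b)) * x0 ^ ((j' : ℕ) + (k' : ℕ) * m) := by
            refine Finset.sum_congr rfl fun j' _ => Finset.sum_congr rfl fun k' _ => ?_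
            rw [Finset.sum_mul]
            refine Finset.sum_congr rfl fun w _ => ?_
            rw [pow_add]
            ring
    have hint : P = Lagrange.interpolate S₀ v
        (fun i => ((∑ j' : Fin m, x i.1 ^ (j' : ℕ) • A.submatrix id (fun a => (j', a)))ᵀ *
          (∑ k' : Fin n, x i.1 ^ ((k' : ℕ) * m) • B.submatrix id (fun b => (k', b)))) a b) :=
      Lagrange.eq_interpolate_of_eval_eq _ hvs hdeg fun i _ => (hval i).symm
    show (Lagrange.interpolate S₀ v _).coeff ((j : ℕ) + (k : ℕ) * m) = (Aᵀ * B) (j, a) (k, b)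
    rw [← hint, hP]
    rw [Polynomial.finset_sum_coeff]
    rw [Finset.sum_eq_single j]
    · rw [Polynomial.finset_sum_coeff, Finset.sum_eq_single k]
      · simp [Polynomial.coeff_C_mul, Polynomial.coeff_X_pow]
      · intro k' _ hk'
        simp only [Polynomial.coeff_C_mul, Polynomial.coeff_X_pow]
        rw [if_neg, mul_zero]
        intro hcon
        exact hk' ((Fin.ext (exp_eq_aux j.isLt j.isLt hcon).2.symm))
      · intro hcon; exact absurd (Finset.mem_univ k) hcon
    · intro j' _ hj'
      rw [Polynomial.finset_sum_coeff]
      refine Finset.sum_eq_zero fun k' _ => ?_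
      simp only [Polynomial.coeff_C_mul, Polynomial.coeff_X_pow]
      rw [if_neg, mul_zero]
      intro hcon
      exact hj' ((Fin.ext (exp_eq_aux j.isLt j'.isLt hcon).1).symm)
    · intro hcon; exact absurd (Finset.mem_univ j) hcon
  · -- Part (iii)
    refine sInf_le_sInf ?_
    rintro e ⟨t, hdt, rfl⟩
    exact ⟨t, part1 t hdt, rfl⟩
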